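/- Let G = H ⋉ K be a semidirect product that is finitely generated, with K locally finite (every finitely generated subgroup of K is finite). Then asdim G = asdim H. -/

import Mathlib

def cayley (G : Type*) [Group G] (X : Set G) : SimpleGraph G :=
  SimpleGraph.fromRel (fun g h => ∃ x ∈ X, h = g * x)

def AsdimLE {V : Type*} (G : SimpleGraph V) (n : ℕ) : Prop :=
  ∀ m : ℕ, 0 < m → ∃ (ι : Type) (f : V → ι) (col : ι → Fin (n + 1)) (D : ℕ),
    (∀ u v : V, f u = f v → G.dist u v ≤ D) ∧
    (∀ u v : V, f u ≠ f v → col (f u) = col (f v) → m < G.dist u v)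

/-- A finitely generated group has asymptotic dimension at most `n` if each of its Cayley
graphs with respect to a finite generating set does. -/
def GroupAsdimLE (G : Type*) [Group G] (n : ℕ) : Prop :=
  ∀ X : Finset G, Subgroup.closure (X : Set G) = ⊤ → AsdimLE (cayley G (X : Set G)) n

open Pointwise

namespace CayleyAux

variable {G : Type*} [Group G]

/-- symmetrized generating set with identity -/
def S (X : Set G) : Set G := insert 1 (X ∪ X⁻¹)

variable {X : Set G}

lemma one_mem_S : (1 : G) ∈ S X := Set.mem_insert _ _

lemma inv_mem_S {g : G} (h : g ∈ S X) : g⁻¹ ∈ S X := by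
  simp only [S, Set.mem_insert_iff, Set.mem_union, Set.mem_inv] at h ⊢
  rcases h with h | h | h
  · left; simp [h]
  · right; right; simpa using h
  · right; left; simpa using h

lemma inv_mem_S_pow {r : ℕ} : ∀ {g : G}, g ∈ S X ^ r → g⁻¹ ∈ S X ^ r := by
  induction r with
  | zero => intro g h; rw [pow_zero, Set.mem_one] at h ⊢; simp [h]
  | succ r ih =>
    intro g h
    rw [pow_succ] at h
    obtain ⟨a, ha, s, hs, rfl⟩ := h
    rw [pow_succ']
    exact mul_inv_rev a s ▸ Set.mul_mem_mul (inv_mem_S hs) (ih ha)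

lemma S_pow_mono {a b : ℕ} (h : a ≤ b) : S X ^ a ⊆ S X ^ b :=
  Set.pow_subset_pow_right one_mem_S h

lemma adj_mem {u v : G} (h : (cayley G X).Adj u v) : u⁻¹ * v ∈ S X := by
  rw [cayley, SimpleGraph.fromRel_adj] at h
  obtain ⟨hne, h | h⟩ := h
  · obtain ⟨x, hx, rfl⟩ := h
    simpa [S] using Or.inr (Or.inl hx)
  · obtain ⟨x, hx, rfl⟩ := h
    have : ((v * x)⁻¹ * v) = x⁻¹ := by group
    rw [this]
    simp only [S, Set.mem_insert_iff, Set.mem_union, Set.mem_inv]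
    right; right; simpa using hx

lemma walk_mem {u v : G} (w : (cayley G X).Walk u v) : u⁻¹ * v ∈ S X ^ w.length := by
  induction w with
  | nil => simp [pow_zero, Set.mem_one]
  | @cons a b c h p ih =>
    rw [SimpleGraph.Walk.length_cons, pow_succ']
    have : a⁻¹ * c = (a⁻¹ * b) * (b⁻¹ * c) := by group
    rw [this]
    exact Set.mul_mem_mul (adj_mem h) ih

lemma exists_walk_of_mem : ∀ (r : ℕ) (u v : G), u⁻¹ * v ∈ S X ^ r →
    ∃ w : (cayley G X).Walk u v, w.length ≤ r := by
  intro r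
  induction r with
  | zero =>
    intro u v h
    rw [pow_zero, Set.mem_one, inv_mul_eq_one] at h
    subst h
    exact ⟨.nil, by simp⟩
  | succ r ih =>
    intro u v h
    rw [pow_succ] at h
    obtain ⟨a, ha, s, hs, has⟩ := h
    obtain ⟨w, hw⟩ := ih u (u * a) (by simpa using ha)
    have has' : a * s = u⁻¹ * v := has
    have hmid : v = (u * a) * s := by
      rw [mul_assoc, has']; group
    simp only [S, Set.mem_insert_iff, Set.mem_union, Set.mem_inv] at hs
    by_cases heq : u * a = v
    · exact ⟨w.copy rfl heq, by simp [hw]; omega⟩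
    rcases hs with rfl | hs | hs
    · exact absurd (by simpa using hmid.symm) heq
    · have hadj : (cayley G X).Adj (u * a) v := by
        rw [cayley, SimpleGraph.fromRel_adj]
        exact ⟨heq, Or.inl ⟨s, hs, hmid⟩⟩
      exact ⟨w.concat hadj, by simp [SimpleGraph.Walk.length_concat]; omega⟩
    · have hadj : (cayley G X).Adj (u * a) v := by
        rw [cayley, SimpleGraph.fromRel_adj]
        refine ⟨heq, Or.inr ⟨s⁻¹, hs, ?_⟩⟩
        rw [hmid]; group
      exact ⟨w.concat hadj, by simp [SimpleGraph.Walk.length_concat]; omega⟩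

lemma reachable_of_mem {r : ℕ} {u v : G} (h : u⁻¹ * v ∈ S X ^ r) :
    (cayley G X).Reachable u v :=
  ⟨(exists_walk_of_mem r u v h).choose⟩

lemma dist_le_of_mem {r : ℕ} {u v : G} (h : u⁻¹ * v ∈ S X ^ r) :
    (cayley G X).dist u v ≤ r := by
  obtain ⟨w, hw⟩ := exists_walk_of_mem r u v h
  exact (SimpleGraph.dist_le w).trans hw

/-- the union of all balls is a subgroup -/
lemma mem_of_gen (hgen : Subgroup.closure X = ⊤) (g : G) : ∃ r, g ∈ S X ^ r := by
  let Sub : Subgroup G :=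
    { carrier := {g | ∃ r, g ∈ S X ^ r}
      one_mem' := ⟨0, by simp [Set.mem_one]⟩
      mul_mem' := by
        rintro a b ⟨ra, hra⟩ ⟨rb, hrb⟩
        exact ⟨ra + rb, pow_add (S X) ra rb ▸ Set.mul_mem_mul hra hrb⟩
      inv_mem' := by
        rintro a ⟨ra, hra⟩
        exact ⟨ra, inv_mem_S_pow hra⟩ }
  have hle : Subgroup.closure X ≤ Sub := by
    rw [Subgroup.closure_le]
    intro x hx
    exact ⟨1, by simpa [S, pow_one] using Or.inr (Or.inl hx)⟩
  exact hle (hgen ▸ Subgroup.mem_top g)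

lemma reachable (hgen : Subgroup.closure X = ⊤) (u v : G) :
    (cayley G X).Reachable u v := by
  obtain ⟨r, hr⟩ := mem_of_gen hgen (u⁻¹ * v)
  exact reachable_of_mem hr

lemma mem_of_dist (hgen : Subgroup.closure X = ⊤) (u v : G) :
    u⁻¹ * v ∈ S X ^ ((cayley G X).dist u v) := by
  obtain ⟨w, hw⟩ := (reachable hgen u v).exists_walk_length_eq_dist
  exact hw ▸ walk_mem w

lemma dist_pos (hgen : Subgroup.closure X = ⊤) {u v : G} (h : u ≠ v) :
    0 < (cayley G X).dist u v := by
  have hr := reachable hgen u v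
  rcases Nat.eq_zero_or_pos ((cayley G X).dist u v) with h0 | h0
  · rw [SimpleGraph.dist_eq_zero_iff_eq_or_not_reachable] at h0
    rcases h0 with h0 | h0
    · exact absurd h0 h
    · exact absurd hr h0
  · exact h0

lemma hom_dist_le {G' : Type*} [Group G'] {X' : Set G'} (φ : G →* G') {L : ℕ}
    (hφ : φ '' S X ⊆ S X' ^ L) (hgen : Subgroup.closure X = ⊤) (u v : G) :
    (cayley G' X').dist (φ u) (φ v) ≤ L * (cayley G X).dist u v := by
  have h1 := mem_of_dist hgen u v
  have h2 : φ (u⁻¹ * v) ∈ (φ '' S X) ^ ((cayley G X).dist u v) := by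
    rw [← Set.image_pow]
    exact Set.mem_image_of_mem _ h1
  have h3 : φ (u⁻¹ * v) ∈ S X' ^ (L * (cayley G X).dist u v) := by
    rw [pow_mul]
    exact Set.pow_subset_pow_left hφ h2
  have h4 : (φ u)⁻¹ * (φ v) = φ (u⁻¹ * v) := by simp
  exact dist_le_of_mem (h4 ▸ h3)

lemma S_pow_finite (hX : X.Finite) : ∀ r : ℕ, (S X ^ r).Finite := by
  have hS : (S X).Finite := (hX.union hX.inv).insert 1
  intro r
  induction r with
  | zero => rw [pow_zero]; exact Set.finite_one
  | succ r ih => rw [pow_succ]; exact ih.mul hS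

lemma exists_pow_subset (hgen : Subgroup.closure X = ⊤) {A : Set G} (hA : A.Finite) :
    ∃ r, A ⊆ S X ^ r := by
  refine Set.Finite.induction_on (motive := fun A _ => ∃ r, A ⊆ S X ^ r) A hA ⟨0, Set.empty_subset _⟩ ?_
  rintro a s - - ⟨r, hr⟩
  obtain ⟨ra, hra⟩ := mem_of_gen hgen a
  exact ⟨max ra r, Set.insert_subset (S_pow_mono (le_max_left _ _) hra)
    (hr.trans (S_pow_mono (le_max_right _ _)))⟩

lemma exists_injective_nat (hgen : Subgroup.closure X = ⊤) (hX : X.Finite) :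
    ∃ e : G → ℕ, Function.Injective e := by
  have : (Set.univ : Set G).Countable := by
    have hsub : (Set.univ : Set G) ⊆ ⋃ r, S X ^ r := by
      intro g _
      obtain ⟨r, hr⟩ := mem_of_gen hgen g
      exact Set.mem_iUnion.mpr ⟨r, hr⟩
    exact Set.Countable.mono hsub (Set.countable_iUnion fun r => (S_pow_finite hX r).countable)
  have : Countable G := Set.countable_univ_iff.mp this
  exact Countable.exists_injective_nat G

end CayleyAux


namespace CayleyAux

variable {G : Type*} [Group G] (H K : Subgroup G) [nK : K.Normal]

/-- The map `H → G ⧸ K`. -/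
def φ0 : ↥H →* G ⧸ K := (QuotientGroup.mk' K).comp H.subtype

lemma φ0_bijective (hcomp : Subgroup.IsComplement' H K) : Function.Bijective (φ0 H K) := by
  constructor
  · intro a b hab
    have h1 : ((a : G))⁻¹ * (b : G) ∈ K := QuotientGroup.eq.mp hab
    have h2 : ((a : G))⁻¹ * (b : G) ∈ H := H.mul_mem (H.inv_mem a.2) b.2
    have h3 : ((a : G))⁻¹ * (b : G) = 1 :=
      Subgroup.disjoint_def.mp hcomp.disjoint h2 h1
    have : (a : G) = (b : G) := by
      rw [inv_mul_eq_one] at h3; exact h3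
    exact Subtype.ext this
  · intro q
    induction q using QuotientGroup.induction_on with
    | H g =>
      obtain ⟨⟨⟨h, hh⟩, ⟨k, hk⟩⟩, hprod⟩ := (hcomp.existsUnique g).exists
      have hprod' : h * k = g := hprod
      refine ⟨⟨h, hh⟩, ?_⟩
      show ((h : G) : G ⧸ K) = (g : G ⧸ K)
      rw [QuotientGroup.eq, ← hprod']
      simpa using hk

/-- Projection `G → H` along `K`. -/
noncomputable def proj (hcomp : Subgroup.IsComplement' H K) : G →* ↥H :=
  (MulEquiv.ofBijective (φ0 H K) (φ0_bijective H K hcomp)).symm.toMonoidHom.comp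
    (QuotientGroup.mk' K)

lemma proj_coe (hcomp : Subgroup.IsComplement' H K) (h : ↥H) :
    proj H K hcomp ↑h = h := by
  show (MulEquiv.ofBijective (φ0 H K) (φ0_bijective H K hcomp)).symm
    (QuotientGroup.mk' K ↑h) = h
  have : QuotientGroup.mk' K (↑h : G) = φ0 H K h := rfl
  rw [this]
  exact MulEquiv.symm_apply_apply _ h

lemma kpart_mem (hcomp : Subgroup.IsComplement' H K) (g : G) :
    (↑(proj H K hcomp g))⁻¹ * g ∈ K := by
  have h1 : (MulEquiv.ofBijective (φ0 H K) (φ0_bijective H K hcomp))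
      (proj H K hcomp g) = QuotientGroup.mk' K g :=
    MulEquiv.apply_symm_apply _ _
  have h2 : ((↑(proj H K hcomp g) : G) : G ⧸ K) = (g : G ⧸ K) := h1
  exact QuotientGroup.eq.mp h2

end CayleyAux

/-- For a finitely generated internal semidirect product `G = H ⋉ K` with `K` locally
finite, `asdim G = asdim H`. -/
theorem asdim_semidirect_locally_finite {G : Type*} [Group G]
    (H K : Subgroup G) (hK : K.Normal) (hcomp : Subgroup.IsComplement' H K)
    (hfg : Group.FG G)
    (hlf : ∀ F : Finset G, (F : Set G) ⊆ (K : Set G) →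
      ((Subgroup.closure (F : Set G) : Subgroup G) : Set G).Finite) :
    ∀ n : ℕ, GroupAsdimLE G n ↔ GroupAsdimLE H n := by
  classical
  haveI := hK
  intro n
  set p : G →* ↥H := CayleyAux.proj H K hcomp with hpdef
  have hp_coe : ∀ h : ↥H, p ↑h = h := CayleyAux.proj_coe H K hcomp
  have hp_surj : Function.Surjective p := fun h => ⟨↑h, hp_coe h⟩
  constructor
  · -- asdim G ≤ n → asdim H ≤ n  (hard direction is the converse; this one uses retraction)
    intro hG Y hY m hm
    obtain ⟨X₀, hX₀⟩ := Group.fg_def.mp hfg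
    set X : Finset G := Y.image (fun y : ↥H => (y : G)) ∪ X₀ with hXdef
    have hXgen : Subgroup.closure (↑X : Set G) = ⊤ := by
      refine top_unique ?_
      rw [← hX₀]
      refine Subgroup.closure_mono ?_
      intro x hx
      simp only [hXdef, Finset.coe_union, Set.mem_union]
      exact Or.inr hx
    obtain ⟨ι, f, col, D, hb, hs⟩ := hG X hXgen m hm
    have hSXfin : (CayleyAux.S (↑X : Set G)).Finite := by
      have := CayleyAux.S_pow_finite (X.finite_toSet) 1
      rwa [pow_one] at this
    obtain ⟨L', hL'⟩ := CayleyAux.exists_pow_subset hY (hSXfin.image p)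
    have hincl : H.subtype '' CayleyAux.S (↑Y : Set ↥H) ⊆ CayleyAux.S (↑X : Set G) ^ 1 := by
      rw [pow_one]
      rintro _ ⟨y, hy, rfl⟩
      simp only [CayleyAux.S, Set.mem_insert_iff, Set.mem_union, Set.mem_inv] at hy ⊢
      rcases hy with rfl | hy | hy
      · left; simp
      · right; left
        have hy' : y ∈ Y := hy
        have h6 : (y : G) ∈ Y.image (fun y : ↥H => (y : G)) := Finset.mem_image.mpr ⟨y, hy', rfl⟩
        have h7 : (y : G) ∈ X := Finset.mem_union_left _ h6
        exact h7
      · right; right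
        have h5 : (H.subtype y)⁻¹ = H.subtype y⁻¹ := by simp
        rw [h5]
        have hy' : y⁻¹ ∈ Y := hy
        have h6 : ((y⁻¹ : ↥H) : G) ∈ Y.image (fun y : ↥H => (y : G)) := Finset.mem_image.mpr ⟨y⁻¹, hy', rfl⟩
        have h7 : ((y⁻¹ : ↥H) : G) ∈ X := Finset.mem_union_left _ h6
        exact h7
    refine ⟨ι, fun u => f ↑u, col, L' * D, ?_, ?_⟩
    · intro u v hfe
      have h1 : (cayley G ↑X).dist ↑u ↑v ≤ D := hb ↑u ↑v hfe
      have h2 := CayleyAux.hom_dist_le p hL' hXgen (↑u) (↑v)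
      rw [hp_coe u, hp_coe v] at h2
      calc (cayley ↥H ↑Y).dist u v ≤ L' * (cayley G ↑X).dist ↑u ↑v := h2
        _ ≤ L' * D := Nat.mul_le_mul_left _ h1
    · intro u v hne hcol
      have h1 : m < (cayley G ↑X).dist ↑u ↑v := hs ↑u ↑v hne hcol
      have h2 := CayleyAux.hom_dist_le H.subtype hincl hY u v
      simp only [Subgroup.coe_subtype, one_mul] at h2
      omega
  · -- asdim H ≤ n → asdim G ≤ n
    intro hH X hX m hm
    set Y : Finset ↥H := X.image p with hYdef
    have hYgen : Subgroup.closure (↑Y : Set ↥H) = ⊤ := by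
      have h1 : (↑Y : Set ↥H) = p '' ↑X := Finset.coe_image
      rw [h1, ← MonoidHom.map_closure, hX, ← MonoidHom.range_eq_map]
      exact MonoidHom.range_eq_top.mpr hp_surj
    obtain ⟨ιH, fH, colH, DH, hbH, hsH⟩ := hH Y hYgen m hm
    -- bounded coset sections: image of H-balls in G
    obtain ⟨LD, hLD⟩ := CayleyAux.exists_pow_subset hX
      ((CayleyAux.S_pow_finite (Y.finite_toSet) DH).image H.subtype)
    -- p is 1-Lipschitz
    have hp1 : p '' CayleyAux.S (↑X : Set G) ⊆ CayleyAux.S (↑Y : Set ↥H) ^ 1 := by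
      rw [pow_one]
      rintro _ ⟨x, hx, rfl⟩
      simp only [CayleyAux.S, Set.mem_insert_iff, Set.mem_union, Set.mem_inv] at hx ⊢
      rcases hx with rfl | hx | hx
      · left; simp
      · right; left
        simp only [hYdef, Finset.coe_image, Set.mem_image, Finset.mem_coe]
        exact ⟨x, hx, rfl⟩
      · right; right
        rw [← map_inv]
        simp only [hYdef, Finset.coe_image, Set.mem_image, Finset.mem_coe]
        exact ⟨x⁻¹, hx, rfl⟩
    set s : ℕ := m + 2 * LD with hsdef
    have hKSfin : ((K : Set G) ∩ CayleyAux.S (↑X : Set G) ^ s).Finite :=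
      Set.Finite.inter_of_right (CayleyAux.S_pow_finite (X.finite_toSet) s) _
    set F : Subgroup G := Subgroup.closure ((K : Set G) ∩ CayleyAux.S (↑X : Set G) ^ s)
      with hFdef
    have hFfin : (F : Set G).Finite := by
      have h1 : ((hKSfin.toFinset : Finset G) : Set G)
          = (K : Set G) ∩ CayleyAux.S (↑X : Set G) ^ s := hKSfin.coe_toFinset
      have h2 := hlf hKSfin.toFinset (by rw [h1]; exact Set.inter_subset_left)
      rw [h1] at h2
      exact h2
    obtain ⟨C, hC⟩ := CayleyAux.exists_pow_subset hX hFfin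
    obtain ⟨e, he⟩ := CayleyAux.exists_injective_nat hX (X.finite_toSet)
    -- the step relation and its equivalence classes
    set Step : G → G → Prop :=
      fun g g' => fH (p g) = fH (p g') ∧ g⁻¹ * g' ∈ CayleyAux.S (↑X : Set G) ^ m with hStepdef
    have hStepSymm : Symmetric Step := by
      rintro g g' ⟨h1, h2⟩
      refine ⟨h1.symm, ?_⟩
      have h3 := CayleyAux.inv_mem_S_pow h2
      simpa using h3
    set R : G → G → Prop := Relation.ReflTransGen Step with hRdef
    have hRsymm : Symmetric R := fun a b h => (@Relation.ReflTransGen.stdSymm _ Step ⟨hStepSymm⟩).symm a b h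
    set cls : G → Set G := fun g => {g' | R g g'} with hclsdef
    have hclseq : ∀ {g g' : G}, R g g' → cls g = cls g' := by
      intro g g' h
      ext x
      simp only [hclsdef, Set.mem_setOf_eq]
      exact ⟨fun hx => (hRsymm h).trans hx, fun hx => h.trans hx⟩
    have hfHR : ∀ {g g' : G}, R g g' → fH (p g) = fH (p g') := by
      intro g g' h
      induction h with
      | refl => rfl
      | tail _ hstep ih => exact ih.trans hstep.1
    set fG : G → ιH × ℕ := fun g => (fH (p g), sInf (e '' cls g)) with hfGdef
    have hfG_of_R : ∀ {g g' : G}, R g g' → fG g = fG g' := by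
      intro g g' h
      exact Prod.ext (hfHR h) (by simp only [hfGdef]; rw [hclseq h])
    have hR_of_fG : ∀ {g g' : G}, fG g = fG g' → R g g' := by
      intro g g' h
      have h2 : sInf (e '' cls g) = sInf (e '' cls g') := congrArg Prod.snd h
      have hne : (e '' cls g).Nonempty := ⟨e g, ⟨g, Relation.ReflTransGen.refl, rfl⟩⟩
      have hne' : (e '' cls g').Nonempty := ⟨e g', ⟨g', Relation.ReflTransGen.refl, rfl⟩⟩
      have h3 := Nat.sInf_mem hne
      have h4 := Nat.sInf_mem hne'
      rw [h2] at h3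
      obtain ⟨x, hx, hex⟩ := h3
      obtain ⟨x', hx', hex'⟩ := h4
      have hxx : x = x' := he (hex.trans hex'.symm)
      subst hxx
      exact Relation.ReflTransGen.trans hx (hRsymm hx')
    -- main bound along chains
    have hbound : ∀ g g' : G, R g g' →
        g⁻¹ * g' ∈ CayleyAux.S (↑X : Set G) ^ (C + LD) := by
      intro g g' hR
      set γ : G := ↑(p g) with hγdef
      set k : G → G := fun x => γ⁻¹ * (x * (↑(p x))⁻¹) * γ with hkdef
      have hv : ∀ x : G, fH (p x) = fH (p g) →
          γ⁻¹ * ↑(p x) ∈ CayleyAux.S (↑X : Set G) ^ LD := by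
        intro x hx
        have h1 : (cayley ↥H ↑Y).dist (p g) (p x) ≤ DH := hbH _ _ hx.symm
        have h2 := CayleyAux.mem_of_dist hYgen (p g) (p x)
        have h3 : (p g)⁻¹ * (p x) ∈ CayleyAux.S (↑Y : Set ↥H) ^ DH :=
          CayleyAux.S_pow_mono h1 h2
        have h4 : γ⁻¹ * ↑(p x) = H.subtype ((p g)⁻¹ * (p x)) := by
          simp [hγdef]
        rw [h4]
        exact hLD (Set.mem_image_of_mem _ h3)
      have hkK : ∀ x : G, k x ∈ K := by
        intro x
        have h0 := CayleyAux.kpart_mem H K hcomp x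
        have h1 : x * (↑(p x))⁻¹ ∈ K := by
          have h2 := hK.conj_mem _ h0 (↑(p x) : G)
          have h3 : (↑(p x) : G) * ((↑(p x))⁻¹ * x) * (↑(p x))⁻¹ = x * (↑(p x))⁻¹ := by
            group
          rwa [h3] at h2
        have h4 := hK.conj_mem _ h1 γ⁻¹
        have h5 : γ⁻¹ * (x * (↑(p x))⁻¹) * γ⁻¹⁻¹ = k x := by
          simp only [hkdef]; group
        rwa [h5] at h4
      have hstepF : ∀ x x' : G, fH (p x) = fH (p g) → Step x x' →
          (k x)⁻¹ * k x' ∈ F := by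
        intro x x' hx hstep
        have hx' : fH (p x') = fH (p g) := hstep.1.symm.trans hx
        have hvx := hv x hx
        have hvx' := hv x' hx'
        have heq : (k x)⁻¹ * k x'
            = ((γ⁻¹ * ↑(p x)) * (x⁻¹ * x')) * (γ⁻¹ * ↑(p x'))⁻¹ := by
          simp only [hkdef]; group
        have hmem : (k x)⁻¹ * k x' ∈ CayleyAux.S (↑X : Set G) ^ (LD + m + LD) := by
          rw [heq, pow_add, pow_add]
          exact Set.mul_mem_mul (Set.mul_mem_mul hvx hstep.2)
            (CayleyAux.inv_mem_S_pow hvx')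
        have hmem' : (k x)⁻¹ * k x' ∈ CayleyAux.S (↑X : Set G) ^ s :=
          CayleyAux.S_pow_mono (by omega) hmem
        have hKmem : (k x)⁻¹ * k x' ∈ K := K.mul_mem (K.inv_mem (hkK x)) (hkK x')
        exact Subgroup.subset_closure ⟨hKmem, hmem'⟩
      have hinv : ∀ x : G, R g x → fH (p x) = fH (p g) ∧ (k g)⁻¹ * k x ∈ F := by
        intro x hRx
        induction hRx with
        | refl => exact ⟨rfl, by simpa using F.one_mem⟩
        | @tail b c hab hstep ih =>
          refine ⟨hstep.1.symm.trans ih.1, ?_⟩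
          have h1 : (k g)⁻¹ * k c = ((k g)⁻¹ * k b) * ((k b)⁻¹ * k c) := by group
          rw [h1]
          exact F.mul_mem ih.2 (hstepF b c ih.1 hstep)
      obtain ⟨hfx, hF⟩ := hinv g' hR
      have heq2 : g⁻¹ * g' = ((k g)⁻¹ * k g') * (γ⁻¹ * ↑(p g')) := by
        simp only [hkdef, hγdef]; group
      rw [heq2, pow_add]
      exact Set.mul_mem_mul (hC hF) (hv g' hfx)
    refine ⟨ιH × ℕ, fG, fun i => colH i.1, C + LD, ?_, ?_⟩
    · intro u v hfe
      exact CayleyAux.dist_le_of_mem (hbound u v (hR_of_fG hfe))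
    · intro u v hfne hcol
      by_cases hfH : fH (p u) = fH (p v)
      · have hnR : ¬ R u v := fun h => hfne (hfG_of_R h)
        by_contra hle
        push_neg at hle
        have hmem := CayleyAux.S_pow_mono hle (CayleyAux.mem_of_dist hX u v)
        exact hnR (Relation.ReflTransGen.single ⟨hfH, hmem⟩)
      · have h1 : m < (cayley ↥H ↑Y).dist (p u) (p v) := hsH _ _ hfH hcol
        have h2 := CayleyAux.hom_dist_le p hp1 hX u v
        omega
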